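/- Let G be a directed flow network with integer capacities, sources s_1, s_2 and sinks t_1, t_2, let X be a vertex cover of G and Y = V(G) ∖ X, and let (f^1, f^2) be a fractional 2-commodity flow in G. Suppose there are vertices u, v ∈ X and distinct vertices y, z ∈ Y such that the arcs (u, y), (y, v), (u, z) and (z, v) all exist in G and each of them is bi-fractional. Then there exists a fractional 2-commodity flow (g^1, g^2) in G whose value equals that of (f^1, f^2) for both commodities, which has at most as many fractional arcs as (f^1, f^2), and which has strictly fewer bi-fractional arcs than (f^1, f^2). -/

import Mathlib

/-- `x : ℝ` is an integer. -/
def IsAnInt (x : ℝ) : Prop := ∃ n : ℤ, x = n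

/-- A fractional 2-commodity flow on the directed flow network with arc set
`A`, capacities `cap`, sources `s 0, s 1` and sinks `t 0, t 1`. -/
def IsFracFlow {V : Type*} [Fintype V] (A : V → V → Prop) (cap : V → V → ℕ)
    (s t : Fin 2 → V) (f : Fin 2 → V → V → ℝ) : Prop :=
  (∀ i u v, 0 ≤ f i u v) ∧
  (∀ i u v, ¬ A u v → f i u v = 0) ∧
  (∀ u v, f 0 u v + f 1 u v ≤ cap u v) ∧
  (∀ i q, q ≠ s i → q ≠ t i → (∑ u, f i u q) = (∑ u, f i q u))

/-- The value of a single-commodity flow `g` with source `s`. -/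
def flowValue {V : Type*} [Fintype V] (s : V) (g : V → V → ℝ) : ℝ :=
  (∑ u, g s u) - ∑ u, g u s

/-- The number of fractional arcs of a 2-commodity flow. -/
noncomputable def fracArcs {V : Type*} [Fintype V] (f : Fin 2 → V → V → ℝ) : ℕ :=
  Set.ncard {p : V × V | ¬ IsAnInt (f 0 p.1 p.2) ∨ ¬ IsAnInt (f 1 p.1 p.2)}

/-- The number of bi-fractional arcs of a 2-commodity flow. -/
noncomputable def biFracArcs {V : Type*} [Fintype V] (f : Fin 2 → V → V → ℝ) : ℕ :=
  Set.ncard {p : V × V | ¬ IsAnInt (f 0 p.1 p.2) ∧ ¬ IsAnInt (f 1 p.1 p.2)}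

/-- The index of the other commodity. -/
def otherC : Fin 2 → Fin 2 := fun i => if i = 0 then 1 else 0

/-- The arc `(x, y)` is mono-fractional for commodity `i`. -/
def MonoFrac {V : Type*} (f : Fin 2 → V → V → ℝ) (i : Fin 2) (x y : V) : Prop :=
  ¬ IsAnInt (f i x y) ∧ IsAnInt (f (otherC i) x y)

/-- The arc `(x, y)` is bi-fractional. -/
def BiFrac {V : Type*} (f : Fin 2 → V → V → ℝ) (x y : V) : Prop :=
  ¬ IsAnInt (f 0 x y) ∧ ¬ IsAnInt (f 1 x y)

lemma notInt_ceil_pos {x : ℝ} (h : ¬ IsAnInt x) : 0 < (⌈x⌉ : ℝ) - x := by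
  have h1 : x ≤ (⌈x⌉ : ℝ) := Int.le_ceil x
  rcases h1.lt_or_eq with h2 | h2
  · linarith
  · exact absurd ⟨⌈x⌉, h2⟩ h

lemma notInt_fract_pos {x : ℝ} (h : ¬ IsAnInt x) : 0 < Int.fract x :=
  Int.fract_pos.mpr fun h2 => h ⟨⌊x⌋, h2⟩

/-- Lemma 4.7 (Case 4 Rule). -/
theorem case4_rule (V : Type) [Fintype V] [DecidableEq V]
    (A : V → V → Prop) (cap : V → V → ℕ) (s t : Fin 2 → V)
    (X : Finset V) (hX : ∀ u v, A u v → u ∈ X ∨ v ∈ X)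
    (f : Fin 2 → V → V → ℝ) (hf : IsFracFlow A cap s t f)
    (u v y z : V) (hu : u ∈ X) (hv : v ∈ X) (hy : y ∉ X) (hz : z ∉ X)
    (hyz : y ≠ z)
    (hA : A u y ∧ A y v ∧ A u z ∧ A z v)
    (hbi : BiFrac f u y ∧ BiFrac f y v ∧ BiFrac f u z ∧ BiFrac f z v) :
    ∃ g : Fin 2 → V → V → ℝ, IsFracFlow A cap s t g ∧
      (∀ j, flowValue (s j) (g j) = flowValue (s j) (f j)) ∧
      fracArcs g ≤ fracArcs f ∧
      biFracArcs g < biFracArcs f := by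
  classical
  obtain ⟨hA1, hA2, hA3, hA4⟩ := hA
  obtain ⟨⟨hb1a, hb1b⟩, ⟨hb2a, hb2b⟩, ⟨hb3a, hb3b⟩, ⟨hb4a, hb4b⟩⟩ := hbi
  obtain ⟨hpos, hsupp, hcap, hcons⟩ := hf
  have huy : u ≠ y := fun h => hy (h ▸ hu)
  have huz : u ≠ z := fun h => hz (h ▸ hu)
  have hvy : v ≠ y := fun h => hy (h ▸ hv)
  have hvz : v ≠ z := fun h => hz (h ▸ hv)
  have hyu : y ≠ u := huy.symm
  have hzu : z ≠ u := huz.symm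
  have hyv : y ≠ v := hvy.symm
  have hzv : z ≠ v := hvz.symm
  have hzy : z ≠ y := hyz.symm
  have h10 : (1 : Fin 2) ≠ 0 := by decide
  -- indicator function
  set I : V → V → ℝ := fun a b => if a = b then 1 else 0 with hI
  have hIsum : ∀ w : V, (∑ a, I a w) = 1 := by
    intro w; simp [hI, Finset.sum_ite_eq']
  -- the circulation direction
  set d : V → V → ℝ :=
    fun a b => I a u * I b y + I a y * I b v - I a u * I b z - I a z * I b v with hd
  have hduy : d u y = 1 := by simp [hd, hI, huy, huz, hyz]
  have hdyv : d y v = 1 := by simp [hd, hI, hyu, hyz, hvz]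
  have hduz : d u z = -1 := by simp [hd, hI, huy, huz, hzy]
  have hdzv : d z v = -1 := by simp [hd, hI, hzu, hzy, hvy]
  have hd0 : ∀ a b, ¬((a = u ∧ b = y) ∨ (a = y ∧ b = v) ∨ (a = u ∧ b = z) ∨ (a = z ∧ b = v)) →
      d a b = 0 := by
    intro a b h
    push_neg at h
    obtain ⟨h1, h2, h3, h4⟩ := h
    have key : ∀ (p q r w : V), (p = r → q ≠ w) → I p r * I q w = 0 := by
      intro p q r w hpq
      by_cases hp : p = r
      · simp [hI, hpq hp]
      · simp [hI, hp]
    simp only [hd]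
    rw [key _ _ _ _ h1, key _ _ _ _ h2, key _ _ _ _ h3, key _ _ _ _ h4]
    ring
  have hdin : ∀ q, (∑ a, d a q) = I q y - I q z := by
    intro q
    simp only [hd]
    rw [Finset.sum_sub_distrib, Finset.sum_sub_distrib, Finset.sum_add_distrib,
      ← Finset.sum_mul, ← Finset.sum_mul, ← Finset.sum_mul, ← Finset.sum_mul,
      hIsum u, hIsum y, hIsum z]
    ring
  have hdout : ∀ q, (∑ b, d q b) = I q y - I q z := by
    intro q
    simp only [hd]
    rw [Finset.sum_sub_distrib, Finset.sum_sub_distrib, Finset.sum_add_distrib,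
      ← Finset.mul_sum, ← Finset.mul_sum, ← Finset.mul_sum, ← Finset.mul_sum,
      hIsum y, hIsum v, hIsum z]
    ring
  -- the eight distances to integrality
  set e1 : ℝ := (⌈f 0 u y⌉ : ℝ) - f 0 u y with he1
  set e2 : ℝ := (⌈f 0 y v⌉ : ℝ) - f 0 y v with he2
  set e3 : ℝ := Int.fract (f 0 u z) with he3
  set e4 : ℝ := Int.fract (f 0 z v) with he4
  set e5 : ℝ := Int.fract (f 1 u y) with he5
  set e6 : ℝ := Int.fract (f 1 y v) with he6
  set e7 : ℝ := (⌈f 1 u z⌉ : ℝ) - f 1 u z with he7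
  set e8 : ℝ := (⌈f 1 z v⌉ : ℝ) - f 1 z v with he8
  set ε : ℝ := min e1 (min e2 (min e3 (min e4 (min e5 (min e6 (min e7 e8)))))) with hε
  have m1 : ε ≤ e1 := min_le_left _ _
  have m2' : ε ≤ min e2 (min e3 (min e4 (min e5 (min e6 (min e7 e8))))) := min_le_right _ _
  have m2 : ε ≤ e2 := m2'.trans (min_le_left _ _)
  have m3' : ε ≤ min e3 (min e4 (min e5 (min e6 (min e7 e8)))) := m2'.trans (min_le_right _ _)
  have m3 : ε ≤ e3 := m3'.trans (min_le_left _ _)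
  have m4' : ε ≤ min e4 (min e5 (min e6 (min e7 e8))) := m3'.trans (min_le_right _ _)
  have m4 : ε ≤ e4 := m4'.trans (min_le_left _ _)
  have m5' : ε ≤ min e5 (min e6 (min e7 e8)) := m4'.trans (min_le_right _ _)
  have m5 : ε ≤ e5 := m5'.trans (min_le_left _ _)
  have m6' : ε ≤ min e6 (min e7 e8) := m5'.trans (min_le_right _ _)
  have m6 : ε ≤ e6 := m6'.trans (min_le_left _ _)
  have m7' : ε ≤ min e7 e8 := m6'.trans (min_le_right _ _)
  have m7 : ε ≤ e7 := m7'.trans (min_le_left _ _)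
  have m8 : ε ≤ e8 := m7'.trans (min_le_right _ _)
  have hεpos : 0 < ε := by
    rw [hε]
    simp only [lt_min_iff]
    exact ⟨notInt_ceil_pos hb1a, notInt_ceil_pos hb2a, notInt_fract_pos hb3a,
      notInt_fract_pos hb4a, notInt_fract_pos hb1b, notInt_fract_pos hb2b,
      notInt_ceil_pos hb3b, notInt_ceil_pos hb4b⟩
  -- the new flow
  set g : Fin 2 → V → V → ℝ := fun i a b => f i a b + (if i = 0 then ε else -ε) * d a b with hg
  have hgoff : ∀ (i : Fin 2) a b, d a b = 0 → g i a b = f i a b := by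
    intro i a b h0; simp [hg, h0]
  have hg1 : g 0 u y = f 0 u y + ε := by simp [hg, hduy]
  have hg2 : g 0 y v = f 0 y v + ε := by simp [hg, hdyv]
  have hg3 : g 0 u z = f 0 u z - ε := by simp [hg, hduz]; ring
  have hg4 : g 0 z v = f 0 z v - ε := by simp [hg, hdzv]; ring
  have hg5 : g 1 u y = f 1 u y - ε := by simp [hg, hduy, h10]; ring
  have hg6 : g 1 y v = f 1 y v - ε := by simp [hg, hdyv, h10]; ring
  have hg7 : g 1 u z = f 1 u z + ε := by simp [hg, hduz, h10]
  have hg8 : g 1 z v = f 1 z v + ε := by simp [hg, hdzv, h10]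
  have hgin : ∀ (i : Fin 2) q, (∑ a, g i a q) =
      (∑ a, f i a q) + (if i = 0 then ε else -ε) * (I q y - I q z) := by
    intro i q
    simp only [hg]
    rw [Finset.sum_add_distrib, ← Finset.mul_sum, hdin q]
  have hgout : ∀ (i : Fin 2) q, (∑ a, g i q a) =
      (∑ a, f i q a) + (if i = 0 then ε else -ε) * (I q y - I q z) := by
    intro i q
    simp only [hg]
    rw [Finset.sum_add_distrib, ← Finset.mul_sum, hdout q]
  -- floors are nonnegative
  have hfl : ∀ (i : Fin 2) a b, (0:ℝ) ≤ (⌊f i a b⌋ : ℝ) :=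
    fun i a b => Int.cast_nonneg_iff.mpr (Int.floor_nonneg.mpr (hpos i a b))
  refine ⟨g, ⟨?_, ?_, ?_, ?_⟩, ?_, ?_, ?_⟩
  · -- nonnegativity
    intro i a b
    by_cases h : (a = u ∧ b = y) ∨ (a = y ∧ b = v) ∨ (a = u ∧ b = z) ∨ (a = z ∧ b = v)
    · rcases h with ⟨rfl, rfl⟩ | ⟨rfl, rfl⟩ | ⟨rfl, rfl⟩ | ⟨rfl, rfl⟩ <;> fin_cases i <;>
        [show 0 ≤ g 0 a b; show 0 ≤ g 1 a b; show 0 ≤ g 0 a b; show 0 ≤ g 1 a b;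
         show 0 ≤ g 0 a b; show 0 ≤ g 1 a b; show 0 ≤ g 0 a b; show 0 ≤ g 1 a b]
      · rw [hg1]; have := hpos 0 a b; linarith
      · rw [hg5]
        have h2 : f 1 a b - Int.fract (f 1 a b) = (⌊f 1 a b⌋ : ℝ) := Int.self_sub_fract _
        have := hfl 1 a b; rw [he5] at m5; linarith
      · rw [hg2]; have := hpos 0 a b; linarith
      · rw [hg6]
        have h2 : f 1 a b - Int.fract (f 1 a b) = (⌊f 1 a b⌋ : ℝ) := Int.self_sub_fract _
        have := hfl 1 a b; rw [he6] at m6; linarith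
      · rw [hg3]
        have h2 : f 0 a b - Int.fract (f 0 a b) = (⌊f 0 a b⌋ : ℝ) := Int.self_sub_fract _
        have := hfl 0 a b; rw [he3] at m3; linarith
      · rw [hg7]; have := hpos 1 a b; linarith
      · rw [hg4]
        have h2 : f 0 a b - Int.fract (f 0 a b) = (⌊f 0 a b⌋ : ℝ) := Int.self_sub_fract _
        have := hfl 0 a b; rw [he4] at m4; linarith
      · rw [hg8]; have := hpos 1 a b; linarith
    · rw [hgoff i a b (hd0 a b h)]; exact hpos i a b
  · -- support
    intro i a b hab
    have h0 : d a b = 0 := by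
      refine hd0 a b ?_
      rintro (⟨rfl, rfl⟩ | ⟨rfl, rfl⟩ | ⟨rfl, rfl⟩ | ⟨rfl, rfl⟩)
      · exact hab hA1
      · exact hab hA2
      · exact hab hA3
      · exact hab hA4
    rw [hgoff i a b h0]; exact hsupp i a b hab
  · -- capacity
    intro a b
    have hcomb : g 0 a b + g 1 a b = f 0 a b + f 1 a b := by
      simp [hg, h10]; ring
    rw [hcomb]; exact hcap a b
  · -- conservation
    intro i q hs ht
    rw [hgin i q, hgout i q, hcons i q hs ht]
  · -- values
    intro j
    unfold flowValue
    rw [hgin j (s j), hgout j (s j), ]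
    ring
  · -- fractional arcs
    unfold fracArcs
    refine Set.ncard_le_ncard ?_ (Set.toFinite _)
    rintro ⟨a, b⟩ hp
    simp only [Set.mem_setOf_eq] at hp ⊢
    by_cases h : (a = u ∧ b = y) ∨ (a = y ∧ b = v) ∨ (a = u ∧ b = z) ∨ (a = z ∧ b = v)
    · rcases h with ⟨rfl, rfl⟩ | ⟨rfl, rfl⟩ | ⟨rfl, rfl⟩ | ⟨rfl, rfl⟩
      · exact Or.inl hb1a
      · exact Or.inl hb2a
      · exact Or.inl hb3a
      · exact Or.inl hb4a
    · have h0 := hd0 a b h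
      rw [hgoff 0 a b h0, hgoff 1 a b h0] at hp
      exact hp
  · -- bifractional arcs
    unfold biFracArcs
    have hsub : {p : V × V | ¬ IsAnInt (g 0 p.1 p.2) ∧ ¬ IsAnInt (g 1 p.1 p.2)} ⊆
        {p : V × V | ¬ IsAnInt (f 0 p.1 p.2) ∧ ¬ IsAnInt (f 1 p.1 p.2)} := by
      rintro ⟨a, b⟩ hp
      simp only [Set.mem_setOf_eq] at hp ⊢
      by_cases h : (a = u ∧ b = y) ∨ (a = y ∧ b = v) ∨ (a = u ∧ b = z) ∨ (a = z ∧ b = v)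
      · rcases h with ⟨rfl, rfl⟩ | ⟨rfl, rfl⟩ | ⟨rfl, rfl⟩ | ⟨rfl, rfl⟩
        · exact ⟨hb1a, hb1b⟩
        · exact ⟨hb2a, hb2b⟩
        · exact ⟨hb3a, hb3b⟩
        · exact ⟨hb4a, hb4b⟩
      · have h0 := hd0 a b h
        rw [hgoff 0 a b h0, hgoff 1 a b h0] at hp
        exact hp
    obtain ⟨p, i, hpmem, hgint⟩ : ∃ (p : V × V) (i : Fin 2),
        (¬ IsAnInt (f 0 p.1 p.2) ∧ ¬ IsAnInt (f 1 p.1 p.2)) ∧ IsAnInt (g i p.1 p.2) := by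
      have hch : ε = e1 ∨ ε = e2 ∨ ε = e3 ∨ ε = e4 ∨ ε = e5 ∨ ε = e6 ∨ ε = e7 ∨ ε = e8 := by
        rw [hε]
        rcases min_choice e1 (min e2 (min e3 (min e4 (min e5 (min e6 (min e7 e8)))))) with h | h
        · exact Or.inl h
        rw [h]
        rcases min_choice e2 (min e3 (min e4 (min e5 (min e6 (min e7 e8))))) with h | h
        · exact Or.inr (Or.inl h)
        rw [h]
        rcases min_choice e3 (min e4 (min e5 (min e6 (min e7 e8)))) with h | h
        · exact Or.inr (Or.inr (Or.inl h))
        rw [h]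
        rcases min_choice e4 (min e5 (min e6 (min e7 e8))) with h | h
        · exact Or.inr (Or.inr (Or.inr (Or.inl h)))
        rw [h]
        rcases min_choice e5 (min e6 (min e7 e8)) with h | h
        · exact Or.inr (Or.inr (Or.inr (Or.inr (Or.inl h))))
        rw [h]
        rcases min_choice e6 (min e7 e8) with h | h
        · exact Or.inr (Or.inr (Or.inr (Or.inr (Or.inr (Or.inl h)))))
        rw [h]
        rcases min_choice e7 e8 with h | h
        · exact Or.inr (Or.inr (Or.inr (Or.inr (Or.inr (Or.inr (Or.inl h))))))
        · exact Or.inr (Or.inr (Or.inr (Or.inr (Or.inr (Or.inr (Or.inr h))))))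
      rcases hch with h | h | h | h | h | h | h | h
      · exact ⟨(u, y), 0, ⟨hb1a, hb1b⟩, ⟨⌈f 0 u y⌉, by rw [hg1, h, he1]; ring⟩⟩
      · exact ⟨(y, v), 0, ⟨hb2a, hb2b⟩, ⟨⌈f 0 y v⌉, by rw [hg2, h, he2]; ring⟩⟩
      · exact ⟨(u, z), 0, ⟨hb3a, hb3b⟩, ⟨⌊f 0 u z⌋, by
          rw [hg3, h, he3]; exact Int.self_sub_fract _⟩⟩
      · exact ⟨(z, v), 0, ⟨hb4a, hb4b⟩, ⟨⌊f 0 z v⌋, by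
          rw [hg4, h, he4]; exact Int.self_sub_fract _⟩⟩
      · exact ⟨(u, y), 1, ⟨hb1a, hb1b⟩, ⟨⌊f 1 u y⌋, by
          rw [hg5, h, he5]; exact Int.self_sub_fract _⟩⟩
      · exact ⟨(y, v), 1, ⟨hb2a, hb2b⟩, ⟨⌊f 1 y v⌋, by
          rw [hg6, h, he6]; exact Int.self_sub_fract _⟩⟩
      · exact ⟨(u, z), 1, ⟨hb3a, hb3b⟩, ⟨⌈f 1 u z⌉, by rw [hg7, h, he7]; ring⟩⟩
      · exact ⟨(z, v), 1, ⟨hb4a, hb4b⟩, ⟨⌈f 1 z v⌉, by rw [hg8, h, he8]; ring⟩⟩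
    refine Set.ncard_lt_ncard ?_ (Set.toFinite _)
    refine (Set.ssubset_iff_of_subset hsub).mpr ⟨p, hpmem, ?_⟩
    intro hc
    simp only [Set.mem_setOf_eq] at hc
    fin_cases i
    · exact hc.1 hgint
    · exact hc.2 hgint
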